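/- Let X be a path connected, locally path connected and semilocally simply connected topological space and fix x ∈ X. Then the isotropy group π₁(X,x) = {a ∈ Π₁(X) : r(a) = x and s(a) = x} (the set of path-homotopy classes of loops based at x) is a discrete subspace of Π₁(X) with the CO' topology. -/

import Mathlib

open unitInterval

noncomputable section

variable {X : Type*} [TopologicalSpace X]

/-- The path-homotopy (homotopy relative to `{0,1}`) relation on `C(I, X)`. -/
def pRel (f g : C(I, X)) : Prop := f.HomotopicRel g {0, 1}

/-- The path-homotopy setoid on `C(I, X)`. -/
def pSetoid (X : Type*) [TopologicalSpace X] : Setoid C(I, X) :=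
  ⟨pRel, ContinuousMap.HomotopicRel.equivalence⟩

/-- The fundamental groupoid `Π₁(X)` as the quotient of the path space `P(X) = C(I, X)`
(with the compact-open topology) by path homotopy; it carries the quotient (CO') topology. -/
abbrev Pi1 (X : Type*) [TopologicalSpace X] := Quotient (pSetoid X)

/-- The quotient map `q : P(X) → Π₁(X)`. -/
def pq : C(I, X) → Pi1 X := Quotient.mk (pSetoid X)

theorem pRel.endpts {f g : C(I, X)} (h : pRel f g) {t : I} (ht : t ∈ ({0, 1} : Set I)) :
    f t = g t := h.some.fst_eq_snd ht

/-- The source map `s : Π₁(X) → X`, `[γ] ↦ γ(0)`. -/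
def srcMap : Pi1 X → X :=
  Quotient.lift (fun f : C(I, X) => f 0) fun _ _ h =>
    pRel.endpts h (by simp)

/-- The range map `r : Π₁(X) → X`, `[γ] ↦ γ(1)`. -/
def rngMap : Pi1 X → X :=
  Quotient.lift (fun f : C(I, X) => f 1) fun _ _ h =>
    pRel.endpts h (by simp)

/-- A continuous map `I → X` regarded as a `Path` between its endpoints. -/
def toPath (f : C(I, X)) : Path (f 0) (f 1) := ⟨f, rfl, rfl⟩

/-- Concatenation `α ⧠ β` of paths: traverse `β` first and then `α`
(given `β 1 = α 0`). -/
def concat (α β : C(I, X)) (h : β 1 = α 0) : C(I, X) :=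
  ((toPath β).trans ((toPath α).cast h rfl)).toContinuousMap

@[simp] theorem concat_zero (α β : C(I, X)) (h : β 1 = α 0) : concat α β h 0 = β 0 :=
  ((toPath β).trans ((toPath α).cast h rfl)).source

@[simp] theorem concat_one (α β : C(I, X)) (h : β 1 = α 0) : concat α β h 1 = α 1 :=
  ((toPath β).trans ((toPath α).cast h rfl)).target

/-- The set `N([γ], U, V) = {[δ ⧠ γ ⧠ θ] : δ a path in U with δ 0 = γ 1,
θ a path in V with θ 1 = γ 0}` in `Π₁(X)`. -/
def Nhd (a : Pi1 X) (U V : Set X) : Set (Pi1 X) :=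
  { b | ∃ (γ δ θ : C(I, X)) (h₁ : θ 1 = γ 0) (h₂ : γ 1 = δ 0),
      pq γ = a ∧ Set.range δ ⊆ U ∧ Set.range θ ⊆ V ∧
      b = pq (concat δ (concat γ θ h₁) ((concat_one γ θ h₁).trans h₂)) }

/-- A subset `U ⊆ X` is relatively inessential in `X` if every loop in `U` is
null-homotopic (path-homotopic to a constant path) in `X`. -/
def RelInessential (X : Type*) [TopologicalSpace X] (U : Set X) : Prop :=
  ∀ γ : C(I, X), Set.range γ ⊆ U → γ 1 = γ 0 →
    pRel γ (ContinuousMap.const I (γ 0))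

/-- `X` is semilocally simply connected if every point has a relatively inessential
open neighbourhood. -/
def SemilocSimplyConnected (X : Type*) [TopologicalSpace X] : Prop :=
  ∀ x : X, ∃ U : Set X, IsOpen U ∧ x ∈ U ∧ RelInessential X U



section Aux
open CategoryTheory
attribute [local instance] Path.Homotopic.setoid


/-- the segment map `I → I`, affine from `a` to `b`. -/
def seg (a b : I) : C(I, I) :=
  ⟨fun s => ⟨(1 - s.1) * a.1 + s.1 * b.1, by
      constructor <;> nlinarith [s.2.1, s.2.2, a.2.1, a.2.2, b.2.1, b.2.2]⟩,
    by
      refine Continuous.subtype_mk ?_ _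
      fun_prop⟩

@[simp] lemma seg_zero (a b : I) : seg a b 0 = a := by
  simp [seg, Subtype.ext_iff]

@[simp] lemma seg_one (a b : I) : seg a b 1 = b := by
  simp [seg, Subtype.ext_iff]

lemma seg_mem {a b : I} (hab : a ≤ b) (s : I) : seg a b s ∈ Set.Icc a b := by
  constructor <;> rw [← Subtype.coe_le_coe] <;>
    · show _ ≤ _
      simp only [seg, ContinuousMap.coe_mk]
      nlinarith [s.2.1, s.2.2, Subtype.coe_le_coe.2 hab]

/-- segment as a path in `I`. -/
def segP (a b : I) : Path a b := ⟨seg a b, seg_zero a b, seg_one a b⟩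

/-- restriction of a continuous map to `[a,b]`, as a path. -/
def rst (β : C(I, X)) (a b : I) : Path (β a) (β b) :=
  ⟨β.comp (seg a b), by simp, by simp⟩

@[simp] lemma rst_apply (β : C(I, X)) (a b : I) (s : I) : rst β a b s = β (seg a b s) := rfl

lemma rst_range {β : C(I, X)} {a b : I} (hab : a ≤ b) {U : Set X}
    (h : Set.MapsTo β (Set.Icc a b) U) : Set.range (rst β a b) ⊆ U := by
  rintro _ ⟨s, rfl⟩
  exact h (seg_mem hab s)

lemma rst_zero_zero (β : C(I, X)) : rst β 0 0 = Path.refl (β 0) := by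
  ext s
  show β (seg 0 0 s) = β 0
  congr 1
  ext
  simp [seg]

lemma rst_zero_one (β : C(I, X)) (h0 : β 0 = β 0) : (rst β 0 1 : I → X) = β := by
  funext s
  have : seg 0 1 s = s := by simp [seg, Subtype.ext_iff]
  simp [this]

/-- splitting lemma: restriction to `[a,b]` is homotopic to the concatenation of
restrictions to `[a,c]` and `[c,b]`. -/
lemma rst_split (β : C(I, X)) {a c b : I} (hac : a ≤ c) (hcb : c ≤ b) (hab : (a : ℝ) < b) :
    (rst β a b).Homotopic ((rst β a c).trans (rst β c b)) := by
  set T : Path a b := (segP a c).trans (segP c b) with hT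
  have hmem : ∀ s, T s ∈ Set.Icc a b := by
    intro s
    have : T s ∈ Set.range T := ⟨s, rfl⟩
    rw [hT, Path.trans_range] at this
    rcases this with ⟨u, hu⟩ | ⟨u, hu⟩
    · have h2 := seg_mem hac u
      rw [show segP a c u = seg a c u from rfl] at hu
      rw [hu] at h2
      exact ⟨h2.1, h2.2.trans hcb⟩
    · have h2 := seg_mem hcb u
      rw [show segP c b u = seg c b u from rfl] at hu
      rw [hu] at h2
      exact ⟨hac.trans h2.1, h2.2⟩
  have hba : (0:ℝ) < b.1 - a.1 := by linarith
  set f : I → I := fun s => ⟨((T s).1 - a.1) / (b.1 - a.1), by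
    have := hmem s
    constructor
    · apply div_nonneg _ hba.le
      have : a ≤ T s := this.1
      have := Subtype.coe_le_coe.2 this
      linarith
    · rw [div_le_one hba]
      have : T s ≤ b := this.2
      have := Subtype.coe_le_coe.2 this
      linarith⟩ with hf
  have hfc : Continuous f := by
    apply Continuous.subtype_mk
    fun_prop
  have hf0 : f 0 = 0 := by
    simp only [hf]
    ext
    simp [T.source]
  have hf1 : f 1 = 1 := by
    simp only [hf]
    ext
    simp [T.target, div_self hba.ne']
  have key : ∀ s, seg a b (f s) = T s := by
    intro s
    ext
    show (1 - ((T s).1 - a.1) / (b.1 - a.1)) * a.1 + ((T s).1 - a.1) / (b.1 - a.1) * b.1 = (T s).1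
    field_simp
    ring
  have : (rst β a b).reparam f hfc hf0 hf1 = (rst β a c).trans (rst β c b) := by
    ext s
    show β (seg a b (f s)) = _
    rw [key s, hT, Path.trans_apply, Path.trans_apply]
    split_ifs <;> rfl
  rw [← this]
  exact ⟨Path.Homotopy.reparam _ f hfc hf0 hf1⟩

noncomputable def tk (n k : ℕ) : I := ⟨min ((k:ℝ)/n) 1, le_min (by positivity) zero_le_one, min_le_right _ _⟩

lemma tk_coe {n k : ℕ} (hn : 0 < n) (h : k ≤ n) : (tk n k : ℝ) = k / n := by
  apply min_eq_left
  rw [div_le_one (by exact_mod_cast hn)]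
  exact_mod_cast h

@[simp] lemma tk_zero (n : ℕ) : tk n 0 = 0 := by ext; simp [tk]

lemma tk_last {n : ℕ} (hn : 0 < n) : tk n n = 1 := by
  ext
  rw [tk_coe hn le_rfl]
  field_simp
  simp

lemma tk_mono {n k : ℕ} (hn : 0 < n) (h : k + 1 ≤ n) : tk n k ≤ tk n (k+1) := by
  rw [← Subtype.coe_le_coe, tk_coe hn (by omega), tk_coe hn h]
  have hn' : (0:ℝ) < n := by exact_mod_cast hn
  rw [div_le_div_iff_of_pos_right hn']
  exact_mod_cast Nat.le_succ k

lemma tk_pos {n k : ℕ} (hn : 0 < n) (h : k + 1 ≤ n) : (0:ℝ) < tk n (k+1) := by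
  rw [tk_coe hn h]
  positivity


/-- homotopy class of a path as a morphism in the fundamental groupoid -/
def hq {x y : X} (p : Path x y) : (⟨x⟩ : FundamentalGroupoid X) ⟶ ⟨y⟩ := ⟦p⟧

lemma hq_trans {x y z : X} (p : Path x y) (q : Path y z) : hq (p.trans q) = hq p ≫ hq q := rfl
lemma hq_symm {x y : X} (p : Path x y) : hq p.symm = inv (hq p) := by
  rw [← Groupoid.inv_eq_inv]; rfl
lemma hq_refl (x : X) : hq (Path.refl x) = 𝟙 (⟨x⟩ : FundamentalGroupoid X) := rfl
lemma homotopic_iff_hq {x y : X} {p q : Path x y} : p.Homotopic q ↔ hq p = hq q :=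
  ⟨fun h => Quotient.sound h, fun h => Quotient.exact h⟩

/-- The chain lemma. -/
lemma chain (n : ℕ) (hn : 0 < n) (β β' : C(I, X)) (U W : ℕ → Set X)
    (hUβ : ∀ k < n, Set.MapsTo β (Set.Icc (tk n k) (tk n (k+1))) (U k))
    (hUβ' : ∀ k < n, Set.MapsTo β' (Set.Icc (tk n k) (tk n (k+1))) (U k))
    (hUi : ∀ k < n, ∀ {y : X} (L : Path y y), Set.range L ⊆ U k → L.Homotopic (Path.refl y))
    (hWpc : ∀ k ≤ n, IsPathConnected (W k))
    (hWβ : ∀ k ≤ n, β (tk n k) ∈ W k)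
    (hWβ' : ∀ k ≤ n, β' (tk n k) ∈ W k)
    (hWU : ∀ k < n, W k ⊆ U k)
    (hWU' : ∀ k < n, W (k+1) ⊆ U k) :
    ∀ k ≤ n, ∃ (η₀ : Path (β 0) (β' 0)) (η : Path (β (tk n k)) (β' (tk n k))),
      Set.range η₀ ⊆ W 0 ∧ Set.range η ⊆ W k ∧
      (rst β' 0 (tk n k)).Homotopic ((η₀.symm.trans (rst β 0 (tk n k))).trans η) := by
  intro k
  induction k with
  | zero =>
    intro _
    have h1 := hWβ 0 (Nat.zero_le n)
    have h2 := hWβ' 0 (Nat.zero_le n)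
    rw [tk_zero] at h1 h2 ⊢
    obtain ⟨p, hp⟩ := (hWpc 0 (Nat.zero_le n)).joinedIn _ h1 _ h2
    refine ⟨p, p, ?_, ?_, ?_⟩
    · rintro _ ⟨s, rfl⟩; exact hp s
    · rintro _ ⟨s, rfl⟩; exact hp s
    · rw [homotopic_iff_hq, rst_zero_zero, rst_zero_zero, hq_trans, hq_trans, hq_symm,
        hq_refl]
      simp [hq_refl]
  | succ k IH =>
    intro hk1
    have hk : k < n := by omega
    obtain ⟨η₀, η, hη₀, hη, hIH⟩ := IH (by omega)
    obtain ⟨η', hη'⟩ := (hWpc (k+1) hk1).joinedIn _ (hWβ (k+1) hk1) _ (hWβ' (k+1) hk1)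
    have hη'r : Set.range η' ⊆ W (k+1) := by rintro _ ⟨s, rfl⟩; exact hη' s
    set L : Path (β (tk n k)) (β (tk n k)) :=
      ((η.trans (rst β' (tk n k) (tk n (k+1)))).trans η'.symm).trans
        (rst β (tk n k) (tk n (k+1))).symm with hL
    have hLr : Set.range L ⊆ U k := by
      rw [hL, Path.trans_range, Path.trans_range, Path.trans_range, Path.symm_range,
        Path.symm_range]
      apply Set.union_subset (Set.union_subset (Set.union_subset ?_ ?_) ?_) ?_
      · exact (hη.trans (hWU k hk))
      · exact rst_range (tk_mono hn hk1) (hUβ' k hk)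
      · exact hη'r.trans (hWU' k hk)
      · exact rst_range (tk_mono hn hk1) (hUβ k hk)
    have hLnull : L.Homotopic (Path.refl _) := hUi k hk L hLr
    rw [homotopic_iff_hq] at hLnull hIH
    rw [hL, hq_trans, hq_trans, hq_trans, hq_symm, hq_symm, hq_refl] at hLnull
    have key : hq (rst β' (tk n k) (tk n (k+1))) =
        inv (hq η) ≫ hq (rst β (tk n k) (tk n (k+1))) ≫ hq η' := by
      rw [IsIso.comp_inv_eq, IsIso.comp_inv_eq, Category.id_comp] at hLnull
      rw [← hLnull]
      simp
    have splitβ' : (rst β' 0 (tk n (k+1))).Homotopic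
        ((rst β' 0 (tk n k)).trans (rst β' (tk n k) (tk n (k+1)))) :=
      rst_split β' (tk n k).2.1 (tk_mono hn hk1) (by simpa using tk_pos hn hk1)
    have splitβ : (rst β 0 (tk n (k+1))).Homotopic
        ((rst β 0 (tk n k)).trans (rst β (tk n k) (tk n (k+1)))) :=
      rst_split β (tk n k).2.1 (tk_mono hn hk1) (by simpa using tk_pos hn hk1)
    rw [homotopic_iff_hq] at splitβ splitβ'
    refine ⟨η₀, η', hη₀, hη'r, ?_⟩
    rw [homotopic_iff_hq, splitβ']
    simp only [hq_trans, hq_symm]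
    rw [hIH]
    simp only [hq_trans, hq_symm]
    rw [splitβ]
    simp only [hq_trans, hq_symm, key, Category.assoc, IsIso.hom_inv_id_assoc]


/-- a continuous map with specified endpoints, as a path -/
def fpath (f : C(I, X)) {x y : X} (h0 : f 0 = x) (h1 : f 1 = y) : Path x y := ⟨f, h0, h1⟩

@[simp] lemma fpath_coe (f : C(I, X)) {x y : X} (h0 : f 0 = x) (h1 : f 1 = y) :
    (fpath f h0 h1).toContinuousMap = f := rfl

lemma fpath_toCM_eq {x y : X} (p : Path x y) (h0 : p.toContinuousMap 0 = x)
    (h1 : p.toContinuousMap 1 = y) : fpath p.toContinuousMap h0 h1 = p := by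
  ext s; rfl

lemma pq_eq_iff {f g : C(I, X)} {x y : X} (hf0 : f 0 = x) (hf1 : f 1 = y)
    (hg0 : g 0 = x) (hg1 : g 1 = y) :
    pq f = pq g ↔ (fpath f hf0 hf1).Homotopic (fpath g hg0 hg1) := by
  constructor
  · exact fun h => Quotient.exact h
  · exact fun h => Quotient.sound h

lemma concat_eq {x y z : X} (α β : C(I, X)) (hβ0 : β 0 = x) (hβ1 : β 1 = y)
    (hα0 : α 0 = y) (hα1 : α 1 = z) (h : β 1 = α 0) :
    concat α β h = ((fpath β hβ0 hβ1).trans (fpath α hα0 hα1)).toContinuousMap := by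
  ext s
  show ((toPath β).trans ((toPath α).cast h rfl)) s = ((fpath β hβ0 hβ1).trans (fpath α hα0 hα1)) s
  rw [Path.trans_apply, Path.trans_apply]
  split_ifs <;> rfl

lemma homotopic_refl_of_relIness {U : Set X} (hU : RelInessential X U) {y : X}
    (L : Path y y) (hr : Set.range L ⊆ U) : L.Homotopic (Path.refl y) := by
  have h := hU L.toContinuousMap (by simpa using hr) (by simp)
  rw [show (L.toContinuousMap) 0 = y from L.source] at h
  exact h

lemma rst01 (f : C(I, X)) : rst f 0 1 = toPath f := by
  ext s
  show f (seg 0 1 s) = f s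
  congr 1
  ext
  simp [seg]

lemma toPath_eq_fpath (f : C(I, X)) : toPath f = fpath f rfl rfl := rfl

lemma concat2_eq {x y z w : X} (γ δ θ : C(I, X)) (hθ0 : θ 0 = x) (h₁ : θ 1 = γ 0)
    (hγ0 : γ 0 = y) (hγ1 : γ 1 = z) (h₂ : γ 1 = δ 0) (hδ1 : δ 1 = w) :
    concat δ (concat γ θ h₁) ((concat_one γ θ h₁).trans h₂) =
      (((fpath θ hθ0 (h₁.trans hγ0)).trans (fpath γ hγ0 hγ1)).trans
        (fpath δ (h₂.symm.trans hγ1) hδ1)).toContinuousMap := by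
  ext s
  show ((toPath (concat γ θ h₁)).trans ((toPath δ).cast _ rfl)) s =
    (((fpath θ hθ0 (h₁.trans hγ0)).trans (fpath γ hγ0 hγ1)).trans
        (fpath δ (h₂.symm.trans hγ1) hδ1)) s
  rw [Path.trans_apply, Path.trans_apply]
  split_ifs with h'
  · show ((toPath θ).trans ((toPath γ).cast h₁ rfl)) _ =
      ((fpath θ hθ0 (h₁.trans hγ0)).trans (fpath γ hγ0 hγ1)) _
    rw [Path.trans_apply, Path.trans_apply]
    split_ifs <;> rfl
  · rfl

lemma mem_Nhd_self {α : C(I, X)} {x : X} (h0 : α 0 = x) (h1 : α 1 = x) {U V : Set X}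
    (hxU : x ∈ U) (hxV : x ∈ V) : pq α ∈ Nhd (pq α) U V := by
  refine ⟨α, ContinuousMap.const I x, ContinuousMap.const I x, h0.symm,
    by simpa using h1, rfl, ?_, ?_, ?_⟩
  · rintro _ ⟨s, rfl⟩; exact hxU
  · rintro _ ⟨s, rfl⟩; exact hxV
  · rw [concat2_eq (x := x) (y := x) (z := x) (w := x) α (ContinuousMap.const I x)
      (ContinuousMap.const I x) rfl h0.symm h0 h1 (by simpa using h1) rfl]
    rw [pq_eq_iff h0 h1 (((fpath _ rfl (h0.symm.trans h0)).trans (fpath α h0 h1)).trans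
        (fpath _ _ rfl)).source (((fpath _ rfl (h0.symm.trans h0)).trans
        (fpath α h0 h1)).trans (fpath _ _ rfl)).target]
    show (fpath α h0 h1).Homotopic (((Path.refl x).trans
      (fpath α h0 h1)).trans (Path.refl x))
    have hc : ∀ (h0' : (ContinuousMap.const I x) 0 = x) (h1' : (ContinuousMap.const I x) 1 = x),
        fpath (ContinuousMap.const I x) h0' h1' = Path.refl x := by
      intro _ _; ext s; rfl
    rw [homotopic_iff_hq]
    simp [hq_trans, hq_refl]

lemma Nhd_inter {a b : Pi1 X} {x : X} {U : Set X} (hUrel : RelInessential X U)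
    (ha0 : srcMap a = x) (ha1 : rngMap a = x) (hb : b ∈ Nhd a U U)
    (hb0 : srcMap b = x) (hb1 : rngMap b = x) : b = a := by
  obtain ⟨γ, δ, θ, h₁, h₂, hγa, hδU, hθU, rfl⟩ := hb
  have hγ0 : γ 0 = x := by rw [← hγa] at ha0; exact ha0
  have hγ1 : γ 1 = x := by rw [← hγa] at ha1; exact ha1
  have hθ0 : θ 0 = x := by
    have h := hb0
    have h' : (concat δ (concat γ θ h₁) ((concat_one γ θ h₁).trans h₂)) 0 = x := h
    rwa [concat_zero, concat_zero] at h'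
  have hδ1 : δ 1 = x := by
    have h' : (concat δ (concat γ θ h₁) ((concat_one γ θ h₁).trans h₂)) 1 = x := hb1
    rwa [concat_one] at h'
  rw [concat2_eq (x := x) (y := x) (z := x) (w := x) γ δ θ hθ0 h₁ hγ0 hγ1 h₂ hδ1, ← hγa]
  set θP : Path x x := fpath θ hθ0 (h₁.trans hγ0) with hθP
  set γP : Path x x := fpath γ hγ0 hγ1 with hγP
  set δP : Path x x := fpath δ (h₂.symm.trans hγ1) hδ1 with hδP
  rw [pq_eq_iff ((θP.trans γP).trans δP).source ((θP.trans γP).trans δP).target hγ0 hγ1,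
    fpath_toCM_eq]
  have hθnull : θP.Homotopic (Path.refl x) :=
    homotopic_refl_of_relIness hUrel θP (by rw [hθP]; exact hθU)
  have hδnull : δP.Homotopic (Path.refl x) :=
    homotopic_refl_of_relIness hUrel δP (by rw [hδP]; exact hδU)
  rw [homotopic_iff_hq] at hθnull hδnull ⊢
  rw [hγP]
  simp only [hq_trans, hθnull, hδnull, hq_refl, Category.id_comp, Category.comp_id]

lemma isOpen_Nhd [LocallyPathConnectedSpace X] (hX : SemilocSimplyConnected X) (a : Pi1 X)
    {U V : Set X} (hUo : IsOpen U) (hVo : IsOpen V) : IsOpen (Nhd a U V) := by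
  show IsOpen (pq ⁻¹' (Nhd a U V))
  rw [isOpen_iff_forall_mem_open]
  intro β hβm
  obtain ⟨γ, δ, θ, h₁, h₂, hγa, hδU, hθV, hbeq⟩ := hβm
  have hβrel : pRel β (concat δ (concat γ θ h₁) ((concat_one γ θ h₁).trans h₂)) :=
    Quotient.exact hbeq
  have hβ0 : β 0 = θ 0 := by
    have h := hβrel.endpts (show (0:I) ∈ ({0,1} : Set I) by simp)
    rwa [concat_zero, concat_zero] at h
  have hβ1 : β 1 = δ 1 := by
    have h := hβrel.endpts (show (1:I) ∈ ({0,1} : Set I) by simp)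
    rwa [concat_one] at h
  have hβ0V : β 0 ∈ V := hβ0 ▸ hθV ⟨0, rfl⟩
  have hβ1U : β 1 ∈ U := hβ1 ▸ hδU ⟨1, rfl⟩
  -- choose a rel-inessential cover and a Lebesgue number
  choose O hOopen hOmem hOrel using fun s : I => hX (β s)
  obtain ⟨ε, hε, hleb⟩ := lebesgue_number_lemma_of_metric isCompact_univ
    (fun s : I => (hOopen s).preimage β.continuous)
    (fun t _ => Set.mem_iUnion.2 ⟨t, hOmem t⟩)
  obtain ⟨n0, hn0⟩ := exists_nat_one_div_lt hε
  set N : ℕ := n0 + 1 with hNdef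
  have hN : 0 < N := Nat.succ_pos n0
  have hNε : 1 / (N : ℝ) < ε := by exact_mod_cast hn0
  choose sk hsk using fun k : ℕ => hleb (tk N k) (Set.mem_univ _)
  set Uc : ℕ → Set X := fun k => O (sk k) with hUcdef
  have hseg : ∀ k < N, Set.Icc (tk N k) (tk N (k+1)) ⊆ Metric.ball (tk N k) ε := by
    intro k hk t ht
    have h1 := Subtype.coe_le_coe.2 ht.1
    have h2 := Subtype.coe_le_coe.2 ht.2
    rw [tk_coe hN (by omega)] at h1
    rw [tk_coe hN (by omega)] at h2
    rw [Metric.mem_ball, Subtype.dist_eq, Real.dist_eq, tk_coe hN (by omega), abs_lt]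
    have hNR : (0:ℝ) < N := by exact_mod_cast hN
    have hc : ((k+1 : ℕ):ℝ) = (k:ℝ)+1 := by push_cast; ring
    rw [hc] at h2
    have hd : ((k:ℝ)+1) / N - (k:ℝ)/N = 1/N := by field_simp; ring
    constructor
    · linarith
    · linarith
  have hUcβ : ∀ k < N, Set.MapsTo β (Set.Icc (tk N k) (tk N (k+1))) (Uc k) :=
    fun k hk t ht => hsk k (hseg k hk ht)
  -- base point memberships
  have hβtk : ∀ k ≤ N, 0 < k → β (tk N k) ∈ Uc (k-1) := by
    intro k hk h0k
    have e : k - 1 + 1 = k := by omega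
    have := hUcβ (k-1) (by omega)
      (Set.right_mem_Icc.2 (tk_mono hN (by omega)))
    rwa [e] at this
  have hβtk' : ∀ k < N, β (tk N k) ∈ Uc k := fun k hk =>
    hUcβ k hk (Set.left_mem_Icc.2 (tk_mono hN (by omega)))
  -- the base sets for the connecting components
  set Bset : ℕ → Set X := fun k =>
    if k = 0 then V ∩ Uc 0 else if k = N then U ∩ Uc (N-1) else Uc (k-1) ∩ Uc k with hBdef
  have hBopen : ∀ k, IsOpen (Bset k) := by
    intro k
    simp only [hBdef]
    split_ifs
    · exact hVo.inter (hOopen _)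
    · exact hUo.inter (hOopen _)
    · exact (hOopen _).inter (hOopen _)
  have hBmem : ∀ k ≤ N, β (tk N k) ∈ Bset k := by
    intro k hk
    simp only [hBdef]
    split_ifs with hk0 hkN
    · subst hk0
      rw [tk_zero]
      have := hβtk' 0 hN
      rw [tk_zero] at this
      exact ⟨hβ0V, this⟩
    · subst hkN
      have h1 := hβtk N le_rfl hN
      rw [tk_last hN] at h1 ⊢
      exact ⟨hβ1U, h1⟩
    · exact ⟨hβtk k hk (by omega), hβtk' k (by omega)⟩
  set Wc : ℕ → Set X := fun k => pathComponentIn (Bset k) (β (tk N k)) with hWdef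
  have hWpc : ∀ k ≤ N, IsPathConnected (Wc k) := fun k hk =>
    isPathConnected_pathComponentIn (hBmem k hk)
  have hWmem : ∀ k ≤ N, β (tk N k) ∈ Wc k := fun k hk =>
    mem_pathComponentIn_self (hBmem k hk)
  have hWsub : ∀ k, Wc k ⊆ Bset k := fun k => pathComponentIn_subset
  have hWopen : ∀ k, IsOpen (Wc k) := fun k => (hBopen k).pathComponentIn _
  have hWU : ∀ k < N, Wc k ⊆ Uc k := by
    intro k hk
    refine (hWsub k).trans ?_
    simp only [hBdef]
    split_ifs with hk0 hkN
    · subst hk0; exact Set.inter_subset_right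
    · omega
    · exact Set.inter_subset_right
  have hWU' : ∀ k < N, Wc (k+1) ⊆ Uc k := by
    intro k hk
    refine (hWsub (k+1)).trans ?_
    by_cases hkN : k + 1 = N
    · have e : Bset (k+1) = U ∩ Uc (N-1) := by simp [hBdef, hkN]
      have e2 : N - 1 = k := by omega
      rw [e, e2]
      exact Set.inter_subset_right
    · have e : Bset (k+1) = Uc k ∩ Uc (k+1) := by simp [hBdef, hkN]
      rw [e]
      exact Set.inter_subset_left
  -- the open neighbourhood of β
  set M : Set C(I, X) := {f | (∀ k < N, Set.MapsTo f (Set.Icc (tk N k) (tk N (k+1))) (Uc k)) ∧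
      (∀ k ≤ N, f (tk N k) ∈ Wc k)} with hMdef
  refine ⟨M, ?_, ?_, hUcβ, hWmem⟩
  · -- M ⊆ pq ⁻¹' (Nhd a U V)
    intro f hf
    have hch := chain N hN β f Uc Wc hUcβ hf.1
      (fun k hk => fun {y} L hL => homotopic_refl_of_relIness (hOrel (sk k)) L hL)
      hWpc hWmem hf.2 hWU hWU' N le_rfl
    rw [tk_last hN] at hch
    obtain ⟨η₀, η₁, hr₀, hr₁, hhom⟩ := hch
    rw [rst01, rst01] at hhom
    set θP : Path (β 0) (γ 0) := fpath θ hβ0.symm h₁ with hθP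
    set γP : Path (γ 0) (γ 1) := fpath γ rfl rfl with hγP
    set δP : Path (γ 1) (β 1) := fpath δ h₂.symm hβ1.symm with hδP
    rw [concat2_eq (x := β 0) (y := γ 0) (z := γ 1) (w := β 1) γ δ θ hβ0.symm h₁ rfl rfl
      h₂ hβ1.symm] at hbeq
    have hbh : (fpath β rfl rfl).Homotopic ((θP.trans γP).trans δP) := by
      have := (pq_eq_iff rfl rfl ((θP.trans γP).trans δP).source
        ((θP.trans γP).trans δP).target).mp hbeq
      rwa [fpath_toCM_eq] at this
    refine ⟨γ, (δP.trans η₁).toContinuousMap, (η₀.symm.trans θP).toContinuousMap,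
      (η₀.symm.trans θP).target, ((δP.trans η₁).source).symm, hγa, ?_, ?_, ?_⟩
    · show Set.range (δP.trans η₁) ⊆ U
      rw [Path.trans_range]
      apply Set.union_subset
      · rw [hδP]; exact hδU
      · refine hr₁.trans ((hWsub N).trans ?_)
        have e : Bset N = U ∩ Uc (N-1) := by
          simp [hBdef, show ¬ (N = 0) by omega]
        rw [e]
        exact Set.inter_subset_left
    · show Set.range (η₀.symm.trans θP) ⊆ V
      rw [Path.trans_range, Path.symm_range]
      apply Set.union_subset
      · refine hr₀.trans ((hWsub 0).trans ?_)
        have e : Bset 0 = V ∩ Uc 0 := by simp [hBdef]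
        rw [e]
        exact Set.inter_subset_left
      · rw [hθP]; exact hθV
    · rw [concat2_eq (x := f 0) (y := γ 0) (z := γ 1) (w := f 1) γ
        (δP.trans η₁).toContinuousMap (η₀.symm.trans θP).toContinuousMap
        (η₀.symm.trans θP).source (η₀.symm.trans θP).target rfl rfl
        ((δP.trans η₁).source).symm (δP.trans η₁).target]
      rw [pq_eq_iff rfl rfl
        (((fpath (η₀.symm.trans θP).toContinuousMap (η₀.symm.trans θP).source
          ((η₀.symm.trans θP).target.trans rfl)).trans γP).trans
          (fpath (δP.trans η₁).toContinuousMap _ (δP.trans η₁).target)).source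
        (((fpath (η₀.symm.trans θP).toContinuousMap (η₀.symm.trans θP).source
          ((η₀.symm.trans θP).target.trans rfl)).trans γP).trans
          (fpath (δP.trans η₁).toContinuousMap _ (δP.trans η₁).target)).target,
        fpath_toCM_eq, fpath_toCM_eq, fpath_toCM_eq]
      have hhom' : hq (fpath f rfl rfl) = hq ((η₀.symm.trans (toPath β)).trans η₁) := by
        rw [← homotopic_iff_hq]; exact hhom
      have hbh' : hq (toPath β) = hq ((θP.trans γP).trans δP) := by
        rw [← homotopic_iff_hq]; exact hbh
      rw [homotopic_iff_hq, hhom']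
      simp only [hq_trans, hq_symm]
      rw [hbh']
      simp only [hq_trans, hq_symm, Category.assoc]
  · -- M is open
    have hMeq : M = (⋂ k ∈ Finset.range N,
          {f : C(I, X) | Set.MapsTo f (Set.Icc (tk N k) (tk N (k+1))) (Uc k)}) ∩
        ⋂ k ∈ Finset.range (N+1), {f : C(I, X) | f (tk N k) ∈ Wc k} := by
      ext f
      simp only [hMdef, Set.mem_setOf_eq, Set.mem_inter_iff, Set.mem_iInter,
        Finset.mem_range, Nat.lt_succ_iff]
    rw [hMeq]
    refine IsOpen.inter (isOpen_biInter_finset fun k _ => ?_)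
      (isOpen_biInter_finset fun k _ => ?_)
    · exact ContinuousMap.isOpen_setOf_mapsTo (isClosed_Icc.isCompact) (hOopen (sk k))
    · exact (hWopen k).preimage (continuous_eval_const (tk N k))

end Aux

/-- For a path connected, locally path connected, semilocally simply connected
`X` and `x ∈ X`, the isotropy group `π₁(X,x) = {a ∈ Π₁(X) : r(a) = x ∧ s(a) = x}` is a
discrete subspace of `Π₁(X)` with the CO' topology. -/
theorem stmt8 {X : Type*} [TopologicalSpace X] [PathConnectedSpace X]
    [LocallyPathConnectedSpace X] (hX : SemilocSimplyConnected X) (x : X) :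
    DiscreteTopology { a : Pi1 X // rngMap a = x ∧ srcMap a = x } := by
  refine discreteTopology_iff_isOpen_singleton.mpr (fun b => ?_)
  obtain ⟨Uo, hUopen, hxU, hUrel⟩ := hX x
  rw [isOpen_induced_iff]
  refine ⟨Nhd b.1 Uo Uo, isOpen_Nhd hX _ hUopen hUopen, ?_⟩
  ext c
  simp only [Set.mem_preimage, Set.mem_singleton_iff]
  constructor
  · intro hc
    exact Subtype.ext (Nhd_inter hUrel b.2.2 b.2.1 hc c.2.2 c.2.1)
  · intro he
    rw [he]
    obtain ⟨α, hα⟩ := Quotient.exists_rep b.1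
    have hα' : pq α = b.1 := hα
    have h0 : α 0 = x := by
      have h := b.2.2
      rw [← hα'] at h
      exact h
    have h1 : α 1 = x := by
      have h := b.2.1
      rw [← hα'] at h
      exact h
    rw [← hα']
    exact mem_Nhd_self h0 h1 hxU hxU

end
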